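/- Theorem 2 (bias bound for the IHT estimator, non-asymptotic form): If |y_k| ≤ C for every k ∈ U, then the bias of the mean estimator satisfies |E[N⁻¹ t̂_IHT] − N⁻¹ t_y| ≤ C K / N. -/

import Mathlib

open MeasureTheory

/-- Theorem 2 (bias bound for the IHT estimator, non-asymptotic form):
if `|y_k| ≤ C` for every `k`, then `|E[N⁻¹ t̂_IHT] − N⁻¹ t_y| ≤ C K / N`. -/
theorem iht_bias_bound
    {Ω : Type*} [MeasurableSpace Ω] (μ : Measure Ω) [IsProbabilityMeasure μ]
    (N : ℕ) (y : Fin N → ℝ) (I : Fin N → Ω → ℝ)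
    (hI01 : ∀ k, ∀ ω, I k ω = 0 ∨ I k ω = 1)
    (hIint : ∀ k, Integrable (I k) μ)
    (π : Fin N → ℝ)
    (hπ : ∀ k, π k = ∫ ω, I k ω ∂μ)
    (hπmem : ∀ k, π k ∈ Set.Ioc (0 : ℝ) 1)
    (a : ℝ) (ha : a ∈ Set.Ioc (0 : ℝ) 1)
    (U2 : Finset (Fin N)) (K : ℕ) (hK : U2.card = K)
    (hU2 : ∀ k ∈ U2, π k ≤ a)
    (πs : Fin N → ℝ)
    (hπs : ∀ k, πs k = if k ∈ U2 then a else π k)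
    (C : ℝ) (hC : 0 < C) (hy : ∀ k, |y k| ≤ C) :
    |(∫ ω, ((N : ℝ)⁻¹ * ∑ k, I k ω * y k / πs k) ∂μ) - (N : ℝ)⁻¹ * ∑ k, y k|
      ≤ C * K / N := by
  have hπpos : ∀ k, 0 < π k := fun k => (hπmem k).1
  have hπspos : ∀ k, 0 < πs k := by
    intro k; rw [hπs k]; split
    · exact ha.1
    · exact hπpos k
  -- compute the integral
  have hintk : ∀ k : Fin N, Integrable (fun ω => I k ω * y k / πs k) μ := by
    intro k
    simpa [mul_div_assoc] using (hIint k).mul_const (y k / πs k)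
  have hval : ∀ k : Fin N, ∫ ω, I k ω * y k / πs k ∂μ = π k * (y k / πs k) := by
    intro k
    simp_rw [mul_div_assoc]
    rw [integral_mul_const, ← hπ k]
  have hInt : (∫ ω, ((N : ℝ)⁻¹ * ∑ k, I k ω * y k / πs k) ∂μ)
      = (N : ℝ)⁻¹ * ∑ k, π k * (y k / πs k) := by
    rw [integral_const_mul, integral_finset_sum _ (fun k _ => hintk k)]
    simp_rw [hval]
  rw [hInt, ← mul_sub, ← Finset.sum_sub_distrib, abs_mul]
  have hzero : ∀ k ∈ (Finset.univ : Finset (Fin N)), k ∉ U2 →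
      π k * (y k / πs k) - y k = 0 := by
    intro k _ hk
    rw [hπs k, if_neg hk]
    field_simp [ne_of_gt (hπpos k)]
    simp
  have hsum : ∑ k, (π k * (y k / πs k) - y k)
      = ∑ k ∈ U2, (π k * (y k / πs k) - y k) := by
    rw [← Finset.sum_subset (Finset.subset_univ U2) hzero]
  have hbound : |∑ k, (π k * (y k / πs k) - y k)| ≤ C * K := by
    rw [hsum]
    calc |∑ k ∈ U2, (π k * (y k / πs k) - y k)|
        ≤ ∑ k ∈ U2, |π k * (y k / πs k) - y k| := Finset.abs_sum_le_sum_abs _ _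
      _ ≤ ∑ k ∈ U2, C := by
          apply Finset.sum_le_sum
          intro k hk
          rw [hπs k, if_pos hk]
          have : π k * (y k / a) - y k = y k * (π k / a - 1) := by ring
          rw [this, abs_mul]
          have h1 : 0 < π k / a := div_pos (hπpos k) ha.1
          have h2 : π k / a ≤ 1 := (div_le_one ha.1).mpr (hU2 k hk)
          have : |π k / a - 1| ≤ 1 := by
            rw [abs_le]; constructor <;> linarith
          calc |y k| * |π k / a - 1| ≤ C * 1 :=
                mul_le_mul (hy k) this (abs_nonneg _) hC.le
            _ = C := mul_one C
      _ = C * K := by rw [Finset.sum_const, hK, nsmul_eq_mul, mul_comm]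
  have hN : |(N : ℝ)⁻¹| = (N : ℝ)⁻¹ := abs_of_nonneg (by positivity)
  rw [hN, div_eq_inv_mul, mul_comm ((N : ℝ)⁻¹) (C * K)] at *
  calc (N : ℝ)⁻¹ * |∑ k, (π k * (y k / πs k) - y k)|
      ≤ (N : ℝ)⁻¹ * (C * K) := by
        apply mul_le_mul_of_nonneg_left hbound (by positivity)
    _ = C * ↑K * (N : ℝ)⁻¹ := by ring
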